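/- Let (X_k)_{k≥1} be independent, identically distributed Bernoulli(p) random variables on a probability space with 0 < p < 1, and let the processes S, C, Q^r, Q̂^r be defined pathwise from X by the threshold-γ policy with an arbitrary nonnegative integer initial condition q0. Let δ ≥ 0. Then for almost every sample path on which Q^r_k − Q̂^r_k ≤ δ holds for all k ≥ 1, there exists K such that 0 ≤ Q^r_k ≤ γ + δ + 1 for all k ≥ K. -/

import Mathlib

open MeasureTheory ProbabilityTheory

/-- Almost-sure convergence of the receiver virtual queue under the threshold-`γ`
policy with i.i.d. Bernoulli(`p`) erasures, `0 < p < 1`: for almost every sample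
path on which the estimator is accurate within `δ` for all slots `k ≥ 1`, the
queue eventually enters and stays in the interval `[0, γ + δ + 1]`. -/
theorem stmt_7 {Ω : Type*} [MeasurableSpace Ω] (μ : Measure Ω) [IsProbabilityMeasure μ]
    (d : ℤ) (hd : 1 ≤ d) (p : ℝ) (hp0 : 0 < p) (hp1 : p < 1) (q0 : ℕ)
    (γ δ : ℝ) (hγ : 0 ≤ γ) (hδ : 0 ≤ δ)
    (S C X Qr Qhat : ℤ → Ω → ℝ)
    (hS : ∀ k ω, S k ω = 0 ∨ S k ω = 1)
    (hC : ∀ k ω, C k ω = 0 ∨ C k ω = 1)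
    (hXv : ∀ k ω, X k ω = 0 ∨ X k ω = 1)
    (hSC : ∀ k ω, S k ω + C k ω ≤ 1)
    (hS0 : ∀ j ≤ (0 : ℤ), ∀ ω, S j ω = 0)
    (hC0 : ∀ j ≤ (0 : ℤ), ∀ ω, C j ω = 0)
    (hX0 : ∀ j ≤ (0 : ℤ), ∀ ω, X j ω = 0)
    (hQinit : ∀ j ≤ (1 : ℤ), ∀ ω, Qr j ω = (q0 : ℝ))
    (hQrec : ∀ k ≥ (1 : ℤ), ∀ ω,
      Qr (k + 1) ω = max 0 (Qr k ω + S k ω * X k ω - C k ω * (1 - X k ω)))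
    (hQhat : ∀ k ≥ (1 : ℤ), ∀ ω,
      Qhat k ω = Qr (k - d) ω + ∑ j ∈ Finset.Ico (k - d) k, (S j ω * p - C j ω * (1 - p)))
    (hpolC : ∀ k ≥ (1 : ℤ), ∀ ω, C k ω = if γ < Qhat k ω then 1 else 0)
    (hpolS : ∀ k ≥ (1 : ℤ), ∀ ω, S k ω = 1 - C k ω)
    (hXmeas : ∀ k, Measurable (X k))
    (hXindep : iIndepFun X μ)
    (hXbern : ∀ k ≥ (1 : ℤ), μ {ω | X k ω = 1} = ENNReal.ofReal p) :
    ∀ᵐ ω ∂μ, (∀ k ≥ (1 : ℤ), Qr k ω - Qhat k ω ≤ δ) →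
      ∃ K : ℤ, ∀ k ≥ K, 0 ≤ Qr k ω ∧ Qr k ω ≤ γ + δ + 1 := by
  -- the "all ones from N on" events are null
  set E : ℤ → Set Ω := fun N => {ω | ∀ k ≥ N, X k ω = 1} with hEdef
  have hE : ∀ N ≥ (1 : ℤ), μ (E N) = 0 := by
    intro N hN
    have hle : ∀ m : ℕ, μ (E N) ≤ ENNReal.ofReal p ^ m := by
      intro m
      have hsub : E N ⊆ ⋂ j ∈ Finset.Ico N (N + (m : ℤ)), X j ⁻¹' {1} := by
        intro ω hω
        simp only [Set.mem_iInter, Finset.mem_Ico] at *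
        intro j hj
        exact hω j hj.1
      have hprod : μ (⋂ j ∈ Finset.Ico N (N + (m : ℤ)), X j ⁻¹' {1})
          = ∏ j ∈ Finset.Ico N (N + (m : ℤ)), μ (X j ⁻¹' {1}) :=
        hXindep.meas_biInter (fun i _ => ⟨{1}, measurableSet_singleton 1, rfl⟩)
      have hval : ∀ j ∈ Finset.Ico N (N + (m : ℤ)), μ (X j ⁻¹' {1}) = ENNReal.ofReal p := by
        intro j hj
        rw [Finset.mem_Ico] at hj
        have : X j ⁻¹' {1} = {ω | X j ω = 1} := rfl
        rw [this]
        exact hXbern j (le_trans hN hj.1)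
      calc μ (E N) ≤ μ (⋂ j ∈ Finset.Ico N (N + (m : ℤ)), X j ⁻¹' {1}) := measure_mono hsub
        _ = ∏ j ∈ Finset.Ico N (N + (m : ℤ)), μ (X j ⁻¹' {1}) := hprod
        _ = ∏ _j ∈ Finset.Ico N (N + (m : ℤ)), ENNReal.ofReal p := Finset.prod_congr rfl hval
        _ = ENNReal.ofReal p ^ m := by
            rw [Finset.prod_const, Int.card_Ico]
            norm_num
    have htend : Filter.Tendsto (fun m : ℕ => ENNReal.ofReal p ^ m) Filter.atTop (nhds 0) :=
      ENNReal.tendsto_pow_atTop_nhds_zero_of_lt_one (ENNReal.ofReal_lt_one.mpr hp1)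
    have : μ (E N) ≤ 0 := ge_of_tendsto' htend hle
    exact nonpos_iff_eq_zero.mp this
  have hnull : μ (⋃ N : ℤ, E (max N 1)) = 0 :=
    measure_iUnion_null fun N => hE _ (le_max_right _ _)
  filter_upwards [measure_eq_zero_iff_ae_notMem.mp hnull] with ω hω hacc
  -- infinitely many erasure-free slots
  have hzeros : ∀ N : ℤ, ∃ k, N ≤ k ∧ 1 ≤ k ∧ X k ω = 0 := by
    intro N
    have h1 : ω ∉ E (max N 1) := fun h => hω (Set.mem_iUnion.mpr ⟨N, h⟩)
    simp only [hEdef, Set.mem_setOf_eq] at h1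
    push_neg at h1
    obtain ⟨k, hk, hone⟩ := h1
    exact ⟨k, le_trans (le_max_left _ _) hk, le_trans (le_max_right _ _) hk,
      (hXv k ω).resolve_right hone⟩
  -- the queue is nonnegative
  have hQnn : ∀ k : ℤ, 0 ≤ Qr k ω := by
    intro k
    rcases le_or_gt k 1 with h | h
    · rw [hQinit k h]; positivity
    · have h1 : (1 : ℤ) ≤ k - 1 := by omega
      have := hQrec (k - 1) h1 ω
      rw [show k - 1 + 1 = k by ring] at this
      rw [this]; exact le_max_left _ _
  -- above the threshold a coded packet is sent
  have hcoded : ∀ k ≥ (1 : ℤ), γ + δ < Qr k ω →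
      Qr (k + 1) ω = max 0 (Qr k ω - (1 - X k ω)) := by
    intro k hk hQ
    have hhat : γ < Qhat k ω := by have := hacc k hk; linarith
    have hCk : C k ω = 1 := by rw [hpolC k hk ω, if_pos hhat]
    have hSk : S k ω = 0 := by rw [hpolS k hk ω, hCk]; ring
    have := hQrec k hk ω
    rw [hSk, hCk] at this
    rw [this]; ring_nf
  -- above the threshold the queue does not grow
  have hdrop : ∀ k ≥ (1 : ℤ), γ + δ < Qr k ω → Qr (k + 1) ω ≤ Qr k ω := by
    intro k hk hQ
    rw [hcoded k hk hQ]
    have hx : X k ω ≤ 1 := by rcases hXv k ω with h | h <;> rw [h] <;> norm_num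
    have h0 : 0 ≤ Qr k ω := hQnn k
    rcases max_cases (0 : ℝ) (Qr k ω - (1 - X k ω)) with ⟨h, _⟩ | ⟨h, _⟩ <;> rw [h] <;> linarith
  -- the interval [0, γ + δ + 1] is absorbing
  have habsorb : ∀ k ≥ (1 : ℤ), Qr k ω ≤ γ + δ + 1 → Qr (k + 1) ω ≤ γ + δ + 1 := by
    intro k hk hQ
    rcases lt_or_ge (γ + δ) (Qr k ω) with h | h
    · exact le_trans (hdrop k hk h) hQ
    · rw [hQrec k hk ω]
      have hsx : S k ω * X k ω ≤ 1 := by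
        rcases hS k ω with h1 | h1 <;> rcases hXv k ω with h2 | h2 <;> rw [h1, h2] <;> norm_num
      have hcx : 0 ≤ C k ω * (1 - X k ω) := by
        rcases hC k ω with h1 | h1 <;> rcases hXv k ω with h2 | h2 <;> rw [h1, h2] <;> norm_num
      refine max_le (by linarith) (by linarith)
  -- the queue eventually enters the interval
  have henter : ∃ k₀ ≥ (1 : ℤ), Qr k₀ ω ≤ γ + δ + 1 := by
    by_contra hcon
    push_neg at hcon
    have hgt : ∀ k ≥ (1 : ℤ), γ + δ + 1 < Qr k ω := hcon
    have hmono : ∀ k ≥ (1 : ℤ), ∀ i ≥ k, Qr i ω ≤ Qr k ω := by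
      intro k hk
      refine Int.le_induction (le_refl _) (fun i hi ih => ?_)
      exact le_trans (hdrop i (le_trans hk hi) (hgt i (le_trans hk hi) |>.trans_le' (by linarith))) ih
    have hstep : ∀ k ≥ (1 : ℤ), X k ω = 0 → Qr (k + 1) ω = Qr k ω - 1 := by
      intro k hk hx
      have h1 := hgt k hk
      rw [hcoded k hk (by linarith), hx]
      rw [max_eq_right (by linarith)]; ring
    have hmain : ∀ n : ℕ, ∃ k ≥ (1 : ℤ), Qr k ω ≤ (q0 : ℝ) - n := by
      intro n
      induction n with
      | zero => exact ⟨1, le_refl _, by rw [hQinit 1 (le_refl _)]; simp⟩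
      | succ n ih =>
        obtain ⟨k, hk1, hkle⟩ := ih
        obtain ⟨m, hmk, hm1, hmx⟩ := hzeros k
        have hQm : Qr m ω ≤ Qr k ω := hmono k hk1 m hmk
        have := hstep m hm1 hmx
        refine ⟨m + 1, by omega, ?_⟩
        push_cast
        rw [this]
        linarith
    obtain ⟨k, hk1, hkle⟩ := hmain (q0 + 1)
    have := hQnn k
    push_cast at hkle
    linarith
  obtain ⟨k₀, hk₀, hQk₀⟩ := henter
  refine ⟨k₀, Int.le_induction ⟨hQnn k₀, hQk₀⟩ (fun i hi ih => ⟨hQnn _, habsorb i (le_trans hk₀ hi) ih.2⟩)⟩
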